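/- For all integers m ≥ 1 and k with 1 ≤ k ≤ m and k odd, Σ_{i=0}^{m} (-1)^i · C(m+i, m-i) · C(m+k-i, m-k+i) = 0 in ℤ. -/

import Mathlib

open Finset

/-- For odd `k` with `1 ≤ k ≤ m`,
`Σ_{i=0}^{m} (-1)^i C(m+i, m-i) C(m+k-i, m-k+i) = 0`. -/
theorem odd_coeff_vanishes (m k : ℕ) (hm : 1 ≤ m) (hk1 : 1 ≤ k) (hkm : k ≤ m) (hodd : Odd k) :
    ∑ i ∈ Finset.range (m + 1),
        (-1 : ℤ) ^ i * (Nat.choose (m + i) (m - i) : ℤ) *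
          (Nat.choose (m + k - i) (m - k + i) : ℤ) = 0 := by
  set f : ℕ → ℤ := fun i =>
    (-1 : ℤ) ^ i * (Nat.choose (m + i) (m - i) : ℤ) *
      (Nat.choose (m + k - i) (m - k + i) : ℤ) with hf
  have hrestrict : ∑ i ∈ Finset.range (m + 1), f i = ∑ i ∈ Finset.range (k + 1), f i := by
    refine (Finset.sum_subset (Finset.range_subset_range.2 (by omega)) ?_).symm
    intro i hi hni
    simp only [Finset.mem_range] at hi hni
    have hz : Nat.choose (m + k - i) (m - k + i) = 0 :=
      Nat.choose_eq_zero_of_lt (by omega)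
    simp [hf, hz]
  have hneg : ∀ i ∈ Finset.range (k + 1), f (k - i) = - f i := by
    intro i hi
    have hik : i ≤ k := by simpa using Nat.lt_succ_iff.mp (Finset.mem_range.mp hi)
    have e1 : m + (k - i) = m + k - i := by omega
    have e2 : m - (k - i) = m - k + i := by omega
    have e3 : m + k - (k - i) = m + i := by omega
    have e4 : m - k + (k - i) = m - i := by omega
    have hks : (-1 : ℤ) ^ k = -1 := Odd.neg_one_pow hodd
    have h1 : (-1 : ℤ) ^ (k - i) * (-1) ^ i = -1 := by
      rw [← pow_add, Nat.sub_add_cancel hik, hks]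
    have h2 : (-1 : ℤ) ^ i * (-1) ^ i = 1 := by
      rw [← sq, ← pow_mul, mul_comm, pow_mul, neg_one_sq, one_pow]
    have hs : (-1 : ℤ) ^ (k - i) = -(-1) ^ i := by
      linear_combination (-1 : ℤ) ^ i * h1 - (-1 : ℤ) ^ (k - i) * h2
    simp only [hf, e1, e2, e3, e4, hs]
    ring
  have hrefl : ∑ i ∈ Finset.range (k + 1), f i = ∑ i ∈ Finset.range (k + 1), f (k - i) := by
    rw [← Finset.sum_range_reflect]
    simp
  have : ∑ i ∈ Finset.range (k + 1), f i = - ∑ i ∈ Finset.range (k + 1), f i :=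
    hrefl.trans ((Finset.sum_congr rfl hneg).trans (Finset.sum_neg_distrib f))
  rw [hrestrict]
  linarith [this]
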